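/- arXiv:0904.4642 — 3 statements merged into one kernel-verified Lean document; each statement's English description precedes it below -/
import Mathlib

section
/- Let H be a self-adjoint operator on a finite-dimensional Hilbert space with unique ground state ψ₀ of energy 0 and spectral gap γ > 0, and let A be self-adjoint with ⟨ψ₀, A ψ₀⟩ = 0. Then ‖(A)_α ψ₀‖ ≤ ‖[H, A]‖ γ^{-1} e^{−γ²/(4α)}, where (A)_α = √(α/π) ∫ e^{itH} A e^{-itH} e^{-αt²} dt. -/
open MeasureTheory Complex
open scoped InnerProductSpace

lemma aux_norm_exp_le {𝔸 : Type*} [NormedRing 𝔸] [NormedAlgebra ℂ 𝔸] [CompleteSpace 𝔸]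
    (B : 𝔸) (h1 : ‖(1:𝔸)‖ ≤ 1) : ‖NormedSpace.exp B‖ ≤ Real.exp ‖B‖ := by
  have hpow : ∀ n : ℕ, ‖B ^ n‖ ≤ ‖B‖ ^ n := by
    intro n
    cases n with
    | zero => simpa using h1
    | succ k => exact norm_pow_le' B k.succ_pos
  rw [NormedSpace.exp_eq_tsum (𝕂 := ℂ)]
  refine (norm_tsum_le_tsum_norm (NormedSpace.norm_expSeries_summable' B)).trans ?_
  have hsum : Summable fun n : ℕ => ((n.factorial : ℝ))⁻¹ • ‖B‖ ^ n :=
    NormedSpace.expSeries_summable' (𝕂 := ℝ) ‖B‖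
  have hle : ∀ n : ℕ, ‖((n.factorial : ℂ))⁻¹ • B ^ n‖ ≤ ((n.factorial : ℝ))⁻¹ • ‖B‖ ^ n := by
    intro n
    rw [norm_smul, smul_eq_mul]
    have : ‖((n.factorial : ℂ))⁻¹‖ = ((n.factorial : ℝ))⁻¹ := by
      rw [norm_inv]
      simp
    rw [this]
    exact mul_le_mul_of_nonneg_left (hpow n) (by positivity)
  refine (Summable.tsum_le_tsum hle (NormedSpace.norm_expSeries_summable' B) hsum).trans_eq ?_
  rw [Real.exp_eq_exp_ℝ, NormedSpace.exp_eq_tsum (𝕂 := ℝ)]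

lemma aux_exp_apply_eigen {E : Type*} [NormedAddCommGroup E] [NormedSpace ℂ E] [CompleteSpace E]
    (B : E →L[ℂ] E) (v : E) (c : ℂ) (hv : B v = c • v) :
    NormedSpace.exp B v = Complex.exp c • v := by
  have hpow : ∀ n : ℕ, (B ^ n) v = c ^ n • v := by
    intro n
    induction n with
    | zero => simp
    | succ k ih =>
      rw [pow_succ, ContinuousLinearMap.mul_apply, hv, ContinuousLinearMap.map_smul, ih, smul_smul, ← pow_succ']
  have h1 : HasSum (fun n : ℕ => ((n.factorial : ℂ))⁻¹ • (B ^ n) v) (NormedSpace.exp B v) := by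
    simpa using (NormedSpace.exp_series_hasSum_exp' (𝕂 := ℂ) B).mapL (ContinuousLinearMap.apply ℂ E v)
  have h2 : HasSum (fun n : ℕ => ((n.factorial : ℂ))⁻¹ • (B ^ n) v) (Complex.exp c • v) := by
    have h := (NormedSpace.exp_series_hasSum_exp' (𝕂 := ℂ) c).smul_const v
    rw [← Complex.exp_eq_exp_ℂ] at h
    simp only [smul_eq_mul, mul_smul] at h
    simpa [hpow] using h
  exact h1.unique h2
set_option maxHeartbeats 2000000 in
theorem stmt_2 {E : Type*} [NormedAddCommGroup E] [InnerProductSpace ℂ E]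
    [FiniteDimensional ℂ E] (H A : E →L[ℂ] E) (hH : IsSelfAdjoint H)
    (hA : IsSelfAdjoint A)
    (hpos : ∀ v : E, 0 ≤ (⟪v, H v⟫_ℂ).re)
    (ψ₀ : E) (hψ : ‖ψ₀‖ = 1) (hgs : H ψ₀ = 0)
    (hker : ∀ v : E, H v = 0 → ∃ c : ℂ, v = c • ψ₀)
    (γ : ℝ) (hγ : 0 < γ)
    (hgap : ∀ μ : ℝ, Module.End.HasEigenvalue (H : E →ₗ[ℂ] E) (μ : ℂ) → μ = 0 ∨ γ ≤ μ)
    (hexp : ⟪ψ₀, A ψ₀⟫_ℂ = 0)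
    (α : ℝ) (hα : 0 < α) :
    ‖(Real.sqrt (α / Real.pi) •
        ∫ t : ℝ, Real.exp (-(α * t ^ 2)) •
          (NormedSpace.exp ((Complex.I * t) • H) * A *
            NormedSpace.exp ((-(Complex.I * t)) • H))) ψ₀‖
      ≤ ‖H * A - A * H‖ * γ⁻¹ * Real.exp (-(γ ^ 2 / (4 * α))) := by
  have hπ : 0 < Real.pi := Real.pi_pos
  have hα' : α ≠ 0 := ne_of_gt hα
  have hπ' : Real.pi ≠ 0 := ne_of_gt hπ
  have hE : Nontrivial E := by
    refine nontrivial_of_ne ψ₀ 0 (fun h => ?_)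
    rw [h, norm_zero] at hψ; norm_num at hψ
  set C := H * A - A * H with hCdef
  have hT : (H : E →ₗ[ℂ] E).IsSymmetric := hH.isSymmetric
  have hn : Module.finrank ℂ E = Module.finrank ℂ E := rfl
  set b := hT.eigenvectorBasis hn with hbdef
  set μ := hT.eigenvalues hn with hμdef
  have hb : ∀ i, H (b i) = (μ i : ℂ) • b i := fun i => hT.apply_eigenvectorBasis hn i
  set c : EuclideanSpace ℂ (Fin (Module.finrank ℂ E)) := b.repr (A ψ₀) with hcdef
  have hkey : ∀ i, c i = 0 ∨ γ ≤ μ i := by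
    intro i
    rcases hgap (μ i) (hT.hasEigenvalue_eigenvalues hn i) with h0 | hγle
    · left
      obtain ⟨e, he⟩ := hker (b i) (by rw [hb i, h0]; simp)
      rw [hcdef, b.repr_apply_apply, he, inner_smul_left, hexp, mul_zero]
    · right; exact hγle
  have hAnorm : ‖A ψ₀‖ = ‖c‖ := (b.repr.norm_map (A ψ₀)).symm
  have h5 : ‖A ψ₀‖ ≤ ‖C‖ * γ⁻¹ := by
    rcases eq_or_ne (A ψ₀) 0 with h | h
    · rw [h, norm_zero]; positivity
    · have hw : 0 < ‖A ψ₀‖ := norm_pos_iff.mpr h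
      have e1 : ⟪A ψ₀, C ψ₀⟫_ℂ = ⟪A ψ₀, H (A ψ₀)⟫_ℂ := by
        rw [hCdef]
        simp [ContinuousLinearMap.sub_apply, ContinuousLinearMap.mul_apply, hgs,
          inner_sub_right]
      have e2 : γ * ‖A ψ₀‖^2 ≤ (⟪A ψ₀, H (A ψ₀)⟫_ℂ).re := by
        have hmap : ⟪A ψ₀, H (A ψ₀)⟫_ℂ = ⟪c, b.repr (H (A ψ₀))⟫_ℂ :=
          (b.repr.inner_map_map _ _).symm
        have hrepr : ∀ i, b.repr (H (A ψ₀)) i = (μ i:ℂ) * c i := fun i =>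
          hT.eigenvectorBasis_apply_self_apply hn (A ψ₀) i
        have hinner : (⟪A ψ₀, H (A ψ₀)⟫_ℂ).re = ∑ i, μ i * ‖c i‖^2 := by
          rw [hmap, PiLp.inner_apply]
          rw [Complex.re_sum]
          refine Finset.sum_congr rfl fun i _ => ?_
          rw [hrepr i]
          simp only [RCLike.inner_apply]
          have : (μ i:ℂ) * c i * (starRingEnd ℂ) (c i)
              = (μ i:ℂ) * ((starRingEnd ℂ) (c i) * c i) := by ring
          rw [this, Complex.conj_mul', ← Complex.ofReal_pow, ← Complex.ofReal_mul,
            Complex.ofReal_re]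
        have hc2 : ‖A ψ₀‖^2 = ∑ i, ‖c i‖^2 := by
          rw [hAnorm, EuclideanSpace.norm_eq, Real.sq_sqrt (by positivity)]
        rw [hinner, hc2, Finset.mul_sum]
        refine Finset.sum_le_sum fun i _ => ?_
        rcases hkey i with h0 | hγi
        · simp [h0]
        · exact mul_le_mul_of_nonneg_right hγi (by positivity)
      have e3 : (⟪A ψ₀, C ψ₀⟫_ℂ).re ≤ ‖C‖ * ‖A ψ₀‖ := by
        refine (Complex.re_le_norm _).trans ?_
        refine (norm_inner_le_norm _ _).trans ?_
        have := C.le_opNorm ψ₀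
        rw [hψ, mul_one] at this
        calc ‖A ψ₀‖ * ‖C ψ₀‖ ≤ ‖A ψ₀‖ * ‖C‖ :=
              mul_le_mul_of_nonneg_left this (norm_nonneg _)
          _ = ‖C‖ * ‖A ψ₀‖ := by ring
      have hγw : γ * ‖A ψ₀‖ ≤ ‖C‖ := by nlinarith [e2, e3, e1 ▸ e2]
      calc ‖A ψ₀‖ = (γ * ‖A ψ₀‖) * γ⁻¹ := by field_simp
        _ ≤ ‖C‖ * γ⁻¹ := mul_le_mul_of_nonneg_right hγw (by positivity)
  set F : ℝ → (E →L[ℂ] E) := fun t => Real.exp (-(α * t ^ 2)) •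
      (NormedSpace.exp ((Complex.I * t) • H) * A *
        NormedSpace.exp ((-(Complex.I * t)) • H)) with hFdef
  have hFint : Integrable F := by
    have hcont : Continuous F := by
      rw [hFdef]
      refine Continuous.smul (Real.continuous_exp.comp (by fun_prop)) ?_
      refine Continuous.mul (Continuous.mul ?_ continuous_const) ?_
      · exact (continuous_iff_continuousAt.mpr fun x => (NormedSpace.exp_analytic (𝕂 := ℂ) x).continuousAt).comp
          ((continuous_const.mul Complex.continuous_ofReal).smul continuous_const)
      · exact (continuous_iff_continuousAt.mpr fun x => (NormedSpace.exp_analytic (𝕂 := ℂ) x).continuousAt).comp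
          (((continuous_const.mul Complex.continuous_ofReal).neg).smul continuous_const)
    have hre : ∀ β : ℝ, Integrable (fun t : ℝ => Real.exp (-(α*t^2) + β*t)) := by
      intro β
      have h := (integrable_cexp_quadratic (b := (α:ℂ)) (by simpa using hα) (β:ℂ) 0).norm
      refine h.congr (Filter.Eventually.of_forall fun x => ?_)
      show ‖Complex.exp (-(α:ℂ) * (x:ℂ)^2 + (β:ℂ)*(x:ℂ) + 0)‖ = Real.exp (-(α*x^2) + β*x)
      have hx : (-(α:ℂ) * (x:ℂ)^2 + (β:ℂ)*(x:ℂ) + 0) = ((-(α*x^2) + β*x : ℝ) : ℂ) := by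
        push_cast; ring
      rw [hx, Complex.norm_exp, Complex.ofReal_re]
    have hgint : Integrable (fun t : ℝ => ‖A‖ * (Real.exp (-(α*t^2) + (2*‖H‖)*t)
        + Real.exp (-(α*t^2) + (-(2*‖H‖))*t))) :=
      ((hre (2*‖H‖)).add (hre (-(2*‖H‖)))).const_mul _
    refine hgint.mono' hcont.aestronglyMeasurable (Filter.Eventually.of_forall fun t => ?_)
    have hb1 : ‖NormedSpace.exp ((Complex.I * t) • H)‖ ≤ Real.exp (|t| * ‖H‖) := by
      refine (aux_norm_exp_le _ ContinuousLinearMap.norm_id_le).trans (Real.exp_le_exp.mpr ?_)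
      refine le_of_eq ?_
      rw [norm_smul (Complex.I * (t:ℂ)) H]
      simp
    have hb2 : ‖NormedSpace.exp ((-(Complex.I * t)) • H)‖ ≤ Real.exp (|t| * ‖H‖) := by
      refine (aux_norm_exp_le _ ContinuousLinearMap.norm_id_le).trans (Real.exp_le_exp.mpr ?_)
      refine le_of_eq ?_
      rw [norm_smul (-(Complex.I * (t:ℂ))) H]
      simp
    have hXY : ‖NormedSpace.exp ((Complex.I * t) • H) * A *
        NormedSpace.exp ((-(Complex.I * t)) • H)‖
        ≤ Real.exp (|t| * ‖H‖) * ‖A‖ * Real.exp (|t| * ‖H‖) := by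
      refine (norm_mul_le _ _).trans ?_
      refine mul_le_mul ?_ hb2 (norm_nonneg _) (by positivity)
      exact (norm_mul_le _ _).trans (mul_le_mul_of_nonneg_right hb1 (norm_nonneg _))
    have habs : Real.exp (-(α*t^2) + 2*‖H‖*|t|) ≤ Real.exp (-(α*t^2) + (2*‖H‖)*t)
        + Real.exp (-(α*t^2) + (-(2*‖H‖))*t) := by
      rcases abs_cases t with ⟨h1, _⟩ | ⟨h1, _⟩
      · rw [h1]
        exact le_add_of_nonneg_right (Real.exp_nonneg _)
      · rw [h1, show -(α*t^2) + 2*‖H‖*(-t) = -(α*t^2) + (-(2*‖H‖))*t by ring]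
        exact le_add_of_nonneg_left (Real.exp_nonneg _)
    calc ‖F t‖ = Real.exp (-(α*t^2)) * ‖NormedSpace.exp ((Complex.I * t) • H) * A *
            NormedSpace.exp ((-(Complex.I * t)) • H)‖ := by
          simp only [hFdef]
          rw [norm_smul (Real.exp (-(α*t^2))) (NormedSpace.exp ((Complex.I * t) • H) * A *
            NormedSpace.exp ((-(Complex.I * t)) • H)), Real.norm_eq_abs, Real.abs_exp]
      _ ≤ Real.exp (-(α*t^2)) * (Real.exp (|t| * ‖H‖) * ‖A‖ * Real.exp (|t| * ‖H‖)) :=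
          mul_le_mul_of_nonneg_left hXY (Real.exp_nonneg _)
      _ = ‖A‖ * Real.exp (-(α*t^2) + 2*‖H‖*|t|) := by
          rw [Real.exp_add, show (2*‖H‖*|t| : ℝ) = |t| * ‖H‖ + |t| * ‖H‖ by ring, Real.exp_add]
          ring
      _ ≤ ‖A‖ * (Real.exp (-(α*t^2) + (2*‖H‖)*t) + Real.exp (-(α*t^2) + (-(2*‖H‖))*t)) :=
          mul_le_mul_of_nonneg_left habs (norm_nonneg _)
  set f : Fin (Module.finrank ℂ E) → ℝ → ℂ := fun i x =>
    Complex.exp (Complex.I * (μ i) * x) * Complex.exp (-(α:ℂ) * x ^ 2) * c i with hfdef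
  have hrz : ∀ (r : ℝ) (z : ℂ) (x : E), r • (z • x) = ((r:ℂ) * z) • x := by
    intro r z x
    rw [← smul_one_smul ℂ r (z • x), smul_smul]
    norm_num
  have hFψ : ∀ t : ℝ, (F t) ψ₀ = ∑ i, f i t • b i := by
    intro t
    have h0 : NormedSpace.exp ((-(Complex.I * t)) • H) ψ₀ = ψ₀ := by
      have h := aux_exp_apply_eigen ((-(Complex.I * t)) • H) ψ₀ 0 (by
        rw [ContinuousLinearMap.smul_apply, hgs]; simp)
      simpa using h
    have hbi : ∀ i, NormedSpace.exp ((Complex.I * t) • H) (b i)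
        = Complex.exp (Complex.I * (μ i) * t) • b i := by
      intro i
      refine aux_exp_apply_eigen _ _ _ ?_
      rw [ContinuousLinearMap.smul_apply, hb i, smul_smul]
      congr 1
      ring
    have hsum : (F t) ψ₀ = Real.exp (-(α * t ^ 2)) •
        NormedSpace.exp ((Complex.I * t) • H) (A ψ₀) := by
      simp only [hFdef, ContinuousLinearMap.smul_apply, ContinuousLinearMap.mul_apply, h0]
    rw [hsum, ← b.sum_repr (A ψ₀), map_sum, Finset.smul_sum]
    refine Finset.sum_congr rfl fun i _ => ?_
    rw [ContinuousLinearMap.map_smul, hbi i, smul_smul, hrz]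
    simp only [hfdef]
    congr 1
    rw [Complex.ofReal_exp]
    rw [show ((-(α * t ^ 2) : ℝ) : ℂ) = -(α:ℂ) * (t:ℂ)^2 by push_cast; ring]
    ring
  have hfint : ∀ i, Integrable (f i) := by
    intro i
    have h := (integrable_cexp_quadratic (b := (α:ℂ)) (by simpa using hα)
      (Complex.I * (μ i : ℂ)) 0).mul_const (c i)
    refine h.congr (Filter.Eventually.of_forall fun x => ?_)
    show Complex.exp (-(α:ℂ)*(x:ℂ)^2 + (Complex.I * (μ i:ℂ))*(x:ℂ) + 0) * c i = f i x
    simp only [hfdef]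
    rw [← Complex.exp_add]
    congr 2
    ring
  have hfval : ∀ i, ∫ x : ℝ, f i x =
      (Real.sqrt (Real.pi / α) : ℂ) * (Complex.exp (-(μ i:ℂ)^2 / (4*(α:ℂ))) * c i) := by
    intro i
    have h := fourierIntegral_gaussian (b := (α:ℂ)) (by simpa using hα) ((μ i : ℂ))
    have hsqrt : ((Real.pi : ℂ)/(α:ℂ)) ^ ((1:ℂ)/2) = ((Real.sqrt (Real.pi / α) : ℝ) : ℂ) := by
      rw [show ((Real.pi:ℂ)/(α:ℂ)) = ((Real.pi/α : ℝ):ℂ) by push_cast; ring,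
        show ((1:ℂ)/2) = (((1/2 : ℝ) : ℝ):ℂ) by norm_num,
        ← Complex.ofReal_cpow (by positivity), Real.sqrt_eq_rpow]
    calc ∫ x : ℝ, f i x
        = (∫ x : ℝ, Complex.exp (Complex.I * (μ i:ℂ) * x) *
            Complex.exp (-(α:ℂ) * x^2)) * c i := by
          simp only [hfdef]
          exact integral_mul_const _ _
      _ = ((Real.pi : ℂ)/(α:ℂ)) ^ ((1:ℂ)/2) * Complex.exp (-(μ i:ℂ)^2 / (4*(α:ℂ))) * c i := by
          rw [h]
      _ = (Real.sqrt (Real.pi / α) : ℂ) * (Complex.exp (-(μ i:ℂ)^2 / (4*(α:ℂ))) * c i) := by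
          rw [hsqrt, mul_assoc]
  set d : EuclideanSpace ℂ (Fin (Module.finrank ℂ E)) := WithLp.toLp 2 (fun i =>
    Complex.exp (-(μ i:ℂ)^2/(4*(α:ℂ))) * c i) with hddef
  have hv : (Real.sqrt (α / Real.pi) • ∫ t : ℝ, F t) ψ₀ = b.repr.symm d := by
    rw [ContinuousLinearMap.smul_apply, ContinuousLinearMap.integral_apply hFint]
    simp_rw [hFψ]
    rw [integral_finset_sum _ (fun i _ => (hfint i).smul_const (b i))]
    simp_rw [integral_smul_const, hfval]
    rw [Finset.smul_sum]
    have haπ : (α / Real.pi) * (Real.pi / α) = 1 := by field_simp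
    have hone : ((Real.sqrt (α / Real.pi) : ℝ) : ℂ) * ((Real.sqrt (Real.pi / α) : ℝ) : ℂ) = 1 := by
      rw [← Complex.ofReal_mul, ← Real.sqrt_mul (div_nonneg hα.le hπ.le), haπ, Real.sqrt_one]
      simp
    have hterm : ∀ i, Real.sqrt (α / Real.pi) •
        (((Real.sqrt (Real.pi / α) : ℝ):ℂ) * (Complex.exp (-(μ i:ℂ)^2/(4*(α:ℂ))) * c i)) • b i
        = d i • b i := by
      intro i
      rw [hrz, ← mul_assoc, hone, one_mul]
    rw [Finset.sum_congr rfl (fun i _ => hterm i), b.sum_repr_symm]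
  have hd : ‖d‖ ≤ Real.exp (-(γ^2/(4*α))) * ‖c‖ := by
    have hdi : ∀ i, ‖d i‖ ≤ Real.exp (-(γ^2/(4*α))) * ‖c i‖ := by
      intro i
      rcases hkey i with h0 | hγi
      · simp only [hddef, PiLp.toLp_apply, h0, mul_zero, norm_zero]
        positivity
      · simp only [hddef, PiLp.toLp_apply]
        rw [norm_mul,
          show (-(μ i:ℂ)^2/(4*(α:ℂ))) = ((-(μ i^2/(4*α)) : ℝ) : ℂ) by push_cast; ring,
          Complex.norm_exp, Complex.ofReal_re]
        refine mul_le_mul_of_nonneg_right (Real.exp_le_exp.mpr ?_) (norm_nonneg _)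
        have h2 : γ^2 ≤ μ i^2 := by nlinarith
        rw [neg_le_neg_iff]
        gcongr
    rw [EuclideanSpace.norm_eq, EuclideanSpace.norm_eq,
      ← Real.sqrt_sq (Real.exp_nonneg (-(γ^2/(4*α)))), ← Real.sqrt_mul (by positivity)]
    refine Real.sqrt_le_sqrt ?_
    rw [Finset.mul_sum]
    refine Finset.sum_le_sum fun i _ => ?_
    have h1 := hdi i
    nlinarith [norm_nonneg (d i), norm_nonneg (c i),
      Real.exp_nonneg (-(γ^2/(4*α)))]
  rw [hv, LinearIsometryEquiv.norm_map]
  calc ‖d‖ ≤ Real.exp (-(γ^2/(4*α))) * ‖c‖ := hd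
    _ = Real.exp (-(γ^2/(4*α))) * ‖A ψ₀‖ := by rw [hAnorm]
    _ ≤ Real.exp (-(γ^2/(4*α))) * (‖C‖ * γ⁻¹) := by
        exact mul_le_mul_of_nonneg_left h5 (Real.exp_nonneg _)
    _ = ‖C‖ * γ⁻¹ * Real.exp (-(γ^2/(4*α))) := by ring
end

section
/- Let H be a self-adjoint operator with unique ground state ψ₀ of energy 0 and spectral gap γ, and let C be an operator with ⟨ψ₀, C ψ₀⟩ = 0. Then ‖(C)_α ψ₀‖ ≤ e^{−γ²/(4α)} ‖C‖, where (C)_α = √(α/π) ∫ e^{itH} C e^{-itH} e^{-αt²} dt. -/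
open MeasureTheory Complex

lemma exp_apply_eig {E : Type*} [NormedAddCommGroup E] [NormedSpace ℂ E]
    [CompleteSpace E] (A : E →L[ℂ] E) (v : E) (μ : ℂ) (h : A v = μ • v) :
    NormedSpace.exp A v = Complex.exp μ • v := by
  have hpow : ∀ n : ℕ, (A ^ n) v = μ ^ n • v := by
    intro n
    induction n with
    | zero => simp
    | succ n ih =>
      rw [pow_succ, ContinuousLinearMap.mul_apply, h, ContinuousLinearMap.map_smul, ih, smul_smul, ← pow_succ']
  have hs : Summable (fun n : ℕ => ((n.factorial : ℂ)⁻¹) • A ^ n) := NormedSpace.expSeries_summable' A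
  have hμ : Summable (fun n : ℕ => ((n.factorial : ℂ)⁻¹) • μ ^ n) := NormedSpace.expSeries_summable' μ
  have h1 : (NormedSpace.exp A) v = ∑' n : ℕ, (((n.factorial : ℂ)⁻¹) • A ^ n) v := by
    rw [NormedSpace.exp_eq_tsum (𝕂 := ℂ)]
    exact (ContinuousLinearMap.apply ℂ E v).map_tsum hs
  rw [h1]
  have h2 : ∀ n : ℕ, (((n.factorial : ℂ)⁻¹) • A ^ n) v = (((n.factorial : ℂ)⁻¹) * μ ^ n) • v := by
    intro n
    rw [ContinuousLinearMap.smul_apply, hpow, smul_smul]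
  simp_rw [h2]
  rw [Summable.tsum_smul_const (by simpa [smul_eq_mul] using hμ)]
  congr 1
  rw [Complex.exp_eq_exp_ℂ, NormedSpace.exp_eq_tsum (𝕂 := ℂ)]
  simp [smul_eq_mul]

lemma norm_exp_le_exp_norm' {E : Type*} [NormedAddCommGroup E] [NormedSpace ℂ E]
    [CompleteSpace E] (A : E →L[ℂ] E) : ‖NormedSpace.exp A‖ ≤ Real.exp ‖A‖ := by
  rw [NormedSpace.exp_eq_tsum (𝕂 := ℂ)]
  refine (norm_tsum_le_tsum_norm (NormedSpace.norm_expSeries_summable' A)).trans ?_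
  rw [Real.exp_eq_exp_ℝ, NormedSpace.exp_eq_tsum_div]
  refine Summable.tsum_le_tsum ?_ (NormedSpace.norm_expSeries_summable' A)
    (NormedSpace.expSeries_div_summable ‖A‖)
  intro n
  rw [norm_smul, norm_inv, Complex.norm_natCast, div_eq_inv_mul]
  refine mul_le_mul_of_nonneg_left ?_ (by positivity)
  cases n with
  | zero => rw [pow_zero]; exact ContinuousLinearMap.norm_id_le
  | succ m => exact norm_pow_le' A (Nat.succ_pos m)

lemma integrable_gauss_smul {F : Type*} [NormedAddCommGroup F] [NormedSpace ℝ F] {α : ℝ}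
    (hα : 0 < α) (g : ℝ → F) (hg : Continuous g) (M c : ℝ)
    (hb : ∀ t, ‖g t‖ ≤ M * Real.exp (c * |t|)) :
    Integrable (fun t : ℝ => Real.exp (-(α * t ^ 2)) • g t) := by
  have hM : 0 ≤ M := by
    have := (norm_nonneg (g 0)).trans (hb 0)
    simpa using this
  have h2 : Integrable (fun t : ℝ => (M * Real.exp (c ^ 2 / (2 * α))) *
      Real.exp (-(α / 2) * t ^ 2)) :=
    (integrable_exp_neg_mul_sq (by linarith)).const_mul _
  refine h2.mono' ?_ ?_
  · exact ((Real.continuous_exp.comp (by continuity)).smul hg).aestronglyMeasurable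
  · refine Filter.Eventually.of_forall fun t => ?_
    rw [norm_smul, Real.norm_eq_abs, abs_of_pos (Real.exp_pos _)]
    calc Real.exp (-(α * t ^ 2)) * ‖g t‖
        ≤ Real.exp (-(α * t ^ 2)) * (M * Real.exp (c * |t|)) :=
          mul_le_mul_of_nonneg_left (hb t) (Real.exp_pos _).le
      _ = M * (Real.exp (-(α * t ^ 2)) * Real.exp (c * |t|)) := by ring
      _ = M * Real.exp (-(α * t ^ 2) + c * |t|) := by rw [Real.exp_add]
      _ ≤ M * Real.exp (c ^ 2 / (2 * α) + -(α / 2) * t ^ 2) :=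
          mul_le_mul_of_nonneg_left (Real.exp_le_exp.mpr (by
            have h0 : (c ^ 2 / (2 * α) + -(α / 2) * t ^ 2) - (-(α * t ^ 2) + c * |t|)
                = (c - α * |t|) ^ 2 / (2 * α) := by
              have hs : t ^ 2 = |t| ^ 2 := (_root_.sq_abs t).symm
              rw [hs]; field_simp; ring
            linarith [h0, div_nonneg (sq_nonneg (c - α * |t|))
              (by positivity : (0:ℝ) ≤ 2 * α)])) hM
      _ = M * Real.exp (c ^ 2 / (2 * α)) * Real.exp (-(α / 2) * t ^ 2) := by
          rw [Real.exp_add]; ring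

open scoped InnerProductSpace

set_option maxHeartbeats 1000000 in
theorem stmt_3 {E : Type*} [NormedAddCommGroup E] [InnerProductSpace ℂ E]
    [FiniteDimensional ℂ E] (H C : E →L[ℂ] E) (hH : IsSelfAdjoint H)
    (hpos : ∀ v : E, 0 ≤ (⟪v, H v⟫_ℂ).re)
    (ψ₀ : E) (hψ : ‖ψ₀‖ = 1) (hgs : H ψ₀ = 0)
    (hker : ∀ v : E, H v = 0 → ∃ c : ℂ, v = c • ψ₀)
    (γ : ℝ) (hγ : 0 < γ)
    (hgap : ∀ μ : ℝ, Module.End.HasEigenvalue (H : E →ₗ[ℂ] E) (μ : ℂ) → μ = 0 ∨ γ ≤ μ)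
    (hexp : ⟪ψ₀, C ψ₀⟫_ℂ = 0)
    (α : ℝ) (hα : 0 < α) :
    ‖(Real.sqrt (α / Real.pi) •
        ∫ t : ℝ, Real.exp (-(α * t ^ 2)) •
          (NormedSpace.exp ((Complex.I * t) • H) * C *
            NormedSpace.exp ((-(Complex.I * t)) • H))) ψ₀‖
      ≤ Real.exp (-(γ ^ 2 / (4 * α))) * ‖C‖ := by
  have hsym : (H : E →ₗ[ℂ] E).IsSymmetric := hH.isSymmetric
  have hfr : Module.finrank ℂ E = Module.finrank ℂ E := rfl
  set N := Module.finrank ℂ E with hN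
  let b : OrthonormalBasis (Fin N) ℂ E := hsym.eigenvectorBasis hfr
  let μ : Fin N → ℝ := hsym.eigenvalues hfr
  have hb : ∀ i, H (b i) = (μ i : ℂ) • b i := fun i => hsym.apply_eigenvectorBasis hfr i
  set w := C ψ₀ with hw
  -- ψ₀ is fixed by e^{-itH}
  have hexpψ : ∀ t : ℝ, NormedSpace.exp ((-(Complex.I * t)) • H) ψ₀ = ψ₀ := by
    intro t
    have h0 : ((-(Complex.I * t)) • H) ψ₀ = (0 : ℂ) • ψ₀ := by
      simp [ContinuousLinearMap.smul_apply, hgs]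
    rw [exp_apply_eig _ _ _ h0, Complex.exp_zero, one_smul]
  -- adjoint of e^{itH}
  have hstar : ∀ t : ℝ, star ((Complex.I * (t : ℂ)) • H) = (-(Complex.I * t)) • H := by
    intro t
    rw [star_smul, hH.star_eq]
    congr 1
    simp [Complex.star_def, map_mul, Complex.conj_I, Complex.conj_ofReal]
  have hadj : ∀ t : ℝ, ContinuousLinearMap.adjoint (NormedSpace.exp ((Complex.I * (t : ℂ)) • H))
      = NormedSpace.exp ((-(Complex.I * t)) • H) := by
    intro t
    rw [← ContinuousLinearMap.star_eq_adjoint, NormedSpace.star_exp, hstar t]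
  -- inner products with eigenvectors
  have hinner : ∀ (t : ℝ) (i : Fin N),
      ⟪b i, NormedSpace.exp ((Complex.I * (t : ℂ)) • H) w⟫_ℂ
        = Complex.exp (Complex.I * (μ i : ℂ) * (t : ℂ)) * ⟪b i, w⟫_ℂ := by
    intro t i
    rw [← ContinuousLinearMap.adjoint_inner_left, hadj t]
    have hbi : ((-(Complex.I * t)) • H) (b i) = (-(Complex.I * t) * (μ i : ℂ)) • b i := by
      rw [ContinuousLinearMap.smul_apply, hb i, smul_smul]
    rw [exp_apply_eig _ _ _ hbi, inner_smul_left]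
    congr 1
    rw [← Complex.exp_conj]
    congr 1
    simp only [map_neg, map_mul, Complex.conj_I, Complex.conj_ofReal]
    ring
  -- continuity of exponentials
  have hcont : Continuous fun t : ℝ => NormedSpace.exp ((Complex.I * (t : ℂ)) • H) :=
    (letI : NormedAlgebra ℚ (E →L[ℂ] E) := .restrictScalars ℚ ℂ _; NormedSpace.exp_continuous).comp
      ((continuous_const.mul Complex.continuous_ofReal).smul continuous_const)
  have hcont' : Continuous fun t : ℝ => NormedSpace.exp ((-(Complex.I * (t : ℂ))) • H) :=
    (letI : NormedAlgebra ℚ (E →L[ℂ] E) := .restrictScalars ℚ ℂ _; NormedSpace.exp_continuous).comp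
      (((continuous_const.mul Complex.continuous_ofReal).neg).smul continuous_const)
  -- norm bounds
  have hnorm : ∀ t : ℝ, ‖NormedSpace.exp ((Complex.I * (t : ℂ)) • H)‖ ≤ Real.exp (‖H‖ * |t|) := by
    intro t
    refine (norm_exp_le_exp_norm' _).trans (Real.exp_le_exp.mpr
      ((ContinuousLinearMap.opNorm_smul_le _ _).trans_eq ?_))
    rw [norm_mul, Complex.norm_I, one_mul, Complex.norm_real, Real.norm_eq_abs, mul_comm]
  have hnorm' : ∀ t : ℝ, ‖NormedSpace.exp ((-(Complex.I * (t : ℂ))) • H)‖ ≤ Real.exp (‖H‖ * |t|) := by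
    intro t
    refine (norm_exp_le_exp_norm' _).trans (Real.exp_le_exp.mpr
      ((ContinuousLinearMap.opNorm_smul_le _ _).trans_eq ?_))
    rw [norm_neg, norm_mul, Complex.norm_I, one_mul, Complex.norm_real, Real.norm_eq_abs,
      mul_comm]
  -- integrability of the operator-valued integrand
  have hF : Integrable (fun t : ℝ => Real.exp (-(α * t ^ 2)) •
      (NormedSpace.exp ((Complex.I * t) • H) * C *
        NormedSpace.exp ((-(Complex.I * t)) • H))) := by
    refine integrable_gauss_smul hα _ ((hcont.mul continuous_const).mul hcont') ‖C‖ (2 * ‖H‖) ?_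
    intro t
    calc ‖NormedSpace.exp ((Complex.I * t) • H) * C *
            NormedSpace.exp ((-(Complex.I * t)) • H)‖
        ≤ ‖NormedSpace.exp ((Complex.I * t) • H) * C‖ *
            ‖NormedSpace.exp ((-(Complex.I * t)) • H)‖ := norm_mul_le _ _
      _ ≤ (‖NormedSpace.exp ((Complex.I * t) • H)‖ * ‖C‖) *
            ‖NormedSpace.exp ((-(Complex.I * t)) • H)‖ :=
          mul_le_mul_of_nonneg_right (norm_mul_le _ _) (norm_nonneg _)
      _ ≤ (Real.exp (‖H‖ * |t|) * ‖C‖) * Real.exp (‖H‖ * |t|) := by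
          refine mul_le_mul (mul_le_mul_of_nonneg_right (hnorm t) (norm_nonneg _)) (hnorm' t)
            (norm_nonneg _) (by positivity)
      _ = ‖C‖ * Real.exp (2 * ‖H‖ * |t|) := by
          rw [show (2 : ℝ) * ‖H‖ * |t| = ‖H‖ * |t| + ‖H‖ * |t| by ring, Real.exp_add]; ring
  -- integrability of the vector-valued integrand
  have hgcont : Continuous fun t : ℝ => NormedSpace.exp ((Complex.I * (t : ℂ)) • H) w :=
    (ContinuousLinearMap.apply ℂ E w).continuous.comp hcont
  have hG : Integrable (fun t : ℝ => Real.exp (-(α * t ^ 2)) •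
      NormedSpace.exp ((Complex.I * (t : ℂ)) • H) w) := by
    refine integrable_gauss_smul hα _ hgcont ‖w‖ ‖H‖ ?_
    intro t
    calc ‖NormedSpace.exp ((Complex.I * (t : ℂ)) • H) w‖
        ≤ ‖NormedSpace.exp ((Complex.I * (t : ℂ)) • H)‖ * ‖w‖ :=
          ContinuousLinearMap.le_opNorm _ _
      _ ≤ Real.exp (‖H‖ * |t|) * ‖w‖ :=
          mul_le_mul_of_nonneg_right (hnorm t) (norm_nonneg _)
      _ = ‖w‖ * Real.exp (‖H‖ * |t|) := by ring
  set v : E := ∫ t : ℝ, Real.exp (-(α * t ^ 2)) •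
      NormedSpace.exp ((Complex.I * (t : ℂ)) • H) w with hv
  have happly : (∫ t : ℝ, Real.exp (-(α * t ^ 2)) •
      (NormedSpace.exp ((Complex.I * t) • H) * C *
        NormedSpace.exp ((-(Complex.I * t)) • H))) ψ₀ = v := by
    rw [ContinuousLinearMap.integral_apply hF ψ₀]
    refine integral_congr_ae (Filter.Eventually.of_forall fun t => ?_)
    simp only [ContinuousLinearMap.smul_apply, ContinuousLinearMap.mul_apply, hexpψ t, ← hw]
  -- component formula
  have hcomp : ∀ i, ⟪b i, v⟫_ℂ = ((Real.sqrt (Real.pi / α) : ℝ) : ℂ) *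
      Complex.exp (-(μ i : ℂ) ^ 2 / (4 * (α : ℂ))) * ⟪b i, w⟫_ℂ := by
    intro i
    rw [hv, ← integral_inner hG]
    have hpt : ∀ t : ℝ, ⟪b i, Real.exp (-(α * t ^ 2)) •
        NormedSpace.exp ((Complex.I * (t : ℂ)) • H) w⟫_ℂ
        = Complex.exp (Complex.I * (μ i : ℂ) * (t : ℂ)) *
            Complex.exp (-(α : ℂ) * (t : ℂ) ^ 2) * ⟪b i, w⟫_ℂ := by
      intro t
      rw [← Complex.coe_smul, inner_smul_right, hinner t i,
        Complex.ofReal_exp]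
      rw [show ((-(α * t ^ 2) : ℝ) : ℂ) = -(α : ℂ) * (t : ℂ) ^ 2 by push_cast; ring]
      ring
    simp_rw [hpt]
    rw [integral_mul_const, fourierIntegral_gaussian (by simpa using hα) ((μ i : ℂ))]
    congr 2
    rw [show ((Real.pi : ℂ) / (α : ℂ)) = ((Real.pi / α : ℝ) : ℂ) by push_cast; ring,
      Real.sqrt_eq_rpow, Complex.ofReal_cpow (by positivity)]
    norm_num
  -- component bound
  have hKb : ∀ i, ‖⟪b i, v⟫_ℂ‖ ≤
      (Real.sqrt (Real.pi / α) * Real.exp (-(γ ^ 2 / (4 * α)))) * ‖⟪b i, w⟫_ℂ‖ := by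
    intro i
    have hev := hgap (μ i)
      (Module.End.hasEigenvalue_of_hasEigenvector (hsym.hasEigenvector_eigenvectorBasis hfr i))
    rcases hev with h0 | hge
    · have hbz : H (b i) = 0 := by rw [hb i, h0]; simp
      obtain ⟨c, hc⟩ := hker (b i) hbz
      have hz : ⟪b i, w⟫_ℂ = 0 := by
        rw [hc, inner_smul_left, hw, hexp, mul_zero]
      rw [hcomp i, hz]
      simp
    · rw [hcomp i, norm_mul, norm_mul]
      have h1 : ‖((Real.sqrt (Real.pi / α) : ℝ) : ℂ)‖ = Real.sqrt (Real.pi / α) := by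
        rw [Complex.norm_real, Real.norm_eq_abs, _root_.abs_of_nonneg (Real.sqrt_nonneg _)]
      have h2 : ‖Complex.exp (-(μ i : ℂ) ^ 2 / (4 * (α : ℂ)))‖
          ≤ Real.exp (-(γ ^ 2 / (4 * α))) := by
        rw [show (-(μ i : ℂ) ^ 2 / (4 * (α : ℂ))) = ((-(μ i ^ 2 / (4 * α)) : ℝ) : ℂ) by
          push_cast; ring, ← Complex.ofReal_exp, Complex.norm_real, Real.norm_eq_abs,
          _root_.abs_of_nonneg (Real.exp_pos _).le]
        gcongr
        all_goals first | exact hge | exact hγ.le | positivity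
      rw [h1]
      exact mul_le_mul_of_nonneg_right
        (mul_le_mul_of_nonneg_left h2 (Real.sqrt_nonneg _)) (norm_nonneg _)
  -- assemble
  have hwC : ‖w‖ ≤ ‖C‖ := by
    have h := C.le_opNorm ψ₀
    rwa [hψ, mul_one] at h
  set K := Real.sqrt (Real.pi / α) * Real.exp (-(γ ^ 2 / (4 * α))) with hKdef
  have hK0 : 0 ≤ K := by positivity
  have hvK : ‖v‖ ≤ K * ‖w‖ := by
    have h1 : ‖v‖ = Real.sqrt (∑ i, ‖b.repr v i‖ ^ 2) := by
      rw [← b.repr.norm_map v, EuclideanSpace.norm_eq]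
    have h2 : ‖w‖ = Real.sqrt (∑ i, ‖b.repr w i‖ ^ 2) := by
      rw [← b.repr.norm_map w, EuclideanSpace.norm_eq]
    rw [h1]
    calc Real.sqrt (∑ i, ‖b.repr v i‖ ^ 2)
        ≤ Real.sqrt (∑ i, (K * ‖b.repr w i‖) ^ 2) := by
          apply Real.sqrt_le_sqrt
          apply Finset.sum_le_sum
          intro i _
          rw [b.repr_apply_apply, b.repr_apply_apply]
          exact pow_le_pow_left₀ (norm_nonneg _) (hKb i) 2
      _ = K * Real.sqrt (∑ i, ‖b.repr w i‖ ^ 2) := by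
          rw [show ∑ i, (K * ‖b.repr w i‖) ^ 2 = K ^ 2 * ∑ i, ‖b.repr w i‖ ^ 2 by
            rw [Finset.mul_sum]; exact Finset.sum_congr rfl fun i _ => by ring,
            Real.sqrt_mul (sq_nonneg K), Real.sqrt_sq hK0]
      _ = K * ‖w‖ := by rw [h2]
  have hsq1 : Real.sqrt (α / Real.pi) * Real.sqrt (Real.pi / α) = 1 := by
    rw [← Real.sqrt_mul (by positivity),
      show α / Real.pi * (Real.pi / α) = 1 by
        field_simp]
    exact Real.sqrt_one
  rw [ContinuousLinearMap.smul_apply, happly, norm_smul, Real.norm_eq_abs,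
    _root_.abs_of_nonneg (Real.sqrt_nonneg _)]
  calc Real.sqrt (α / Real.pi) * ‖v‖
      ≤ Real.sqrt (α / Real.pi) * (K * ‖w‖) :=
        mul_le_mul_of_nonneg_left hvK (Real.sqrt_nonneg _)
    _ = (Real.sqrt (α / Real.pi) * Real.sqrt (Real.pi / α)) *
          (Real.exp (-(γ ^ 2 / (4 * α))) * ‖w‖) := by rw [hKdef]; ring
    _ = Real.exp (-(γ ^ 2 / (4 * α))) * ‖w‖ := by rw [hsq1, one_mul]
    _ ≤ Real.exp (-(γ ^ 2 / (4 * α))) * ‖C‖ :=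
        mul_le_mul_of_nonneg_left hwC (Real.exp_pos _).le
end

section
/- Let H and M be self-adjoint with ‖H − M‖ ≤ η and let 𝒫_α, 𝒫̃_α be the Gaussian-averaged unitary groups generated by H and M respectively. If additionally H has unique ground state with gap γ and ground state projection P₀, then ‖𝒫̃_α − P₀‖ ≤ η/√(απ) + e^{−γ²/(4α)}. -/
open MeasureTheory
open scoped InnerProductSpace

section Aux
open Complex NormedSpace

variable {E : Type*} [NormedAddCommGroup E] [InnerProductSpace ℂ E] [FiniteDimensional ℂ E]

private lemma exp_skew_norm (A : E →L[ℂ] E) (hA : star A = -A) (x : E) : ‖exp A x‖ = ‖x‖ := by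
  have h1 : star (exp A) * exp A = 1 := by
    let +nondep : NormedAlgebra ℚ (E →L[ℂ] E) := .restrictScalars ℚ ℂ _
    rw [star_exp, hA, ← exp_add_of_commute (Commute.neg_left (Commute.refl A)),
      neg_add_cancel, NormedSpace.exp_zero]
  have h2 : ⟪exp A x, exp A x⟫_ℂ = ⟪x, x⟫_ℂ := by
    rw [← ContinuousLinearMap.adjoint_inner_left, ← ContinuousLinearMap.star_eq_adjoint,
      ← ContinuousLinearMap.comp_apply, ← ContinuousLinearMap.mul_def, h1,
      ContinuousLinearMap.one_apply]
  rw [norm_eq_sqrt_re_inner (𝕜 := ℂ), norm_eq_sqrt_re_inner (𝕜 := ℂ) x, h2]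

private lemma star_I_smul (M : E →L[ℂ] E) (hM : IsSelfAdjoint M) (t : ℝ) :
    star ((I * t) • M) = -((I * t) • M) := by
  rw [star_smul, hM.star_eq, ← neg_smul]
  congr 1
  simp [mul_comm]

private lemma norm_exp_I_smul_le (M : E →L[ℂ] E) (hM : IsSelfAdjoint M) (t : ℝ) :
    ‖exp ((I * t) • M)‖ ≤ 1 := by
  refine ContinuousLinearMap.opNorm_le_bound _ zero_le_one fun x => ?_
  rw [exp_skew_norm _ (star_I_smul M hM t), one_mul]

private lemma exp_eig (A : E →L[ℂ] E) (c : ℂ) (v : E) (h : A v = c • v) :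
    exp A v = Complex.exp c • v := by
  have hpow : ∀ n : ℕ, (A ^ n) v = c ^ n • v := by
    intro n
    induction n with
    | zero => simp
    | succ n ih =>
      rw [pow_succ, pow_succ, ContinuousLinearMap.mul_apply, h, _root_.map_smul, ih,
        smul_smul, mul_comm]
  have hsum := expSeries_summable' (𝕂 := ℂ) A
  have key : exp A v = ∑' n : ℕ, ((n.factorial : ℂ))⁻¹ • (A ^ n) v := by
    rw [exp_eq_tsum ℂ]
    exact ((ContinuousLinearMap.apply ℂ E v).map_tsum hsum).trans (by
      simp [ContinuousLinearMap.apply_apply])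
  rw [key]
  simp only [hpow, smul_smul]
  rw [Complex.exp_eq_exp_ℂ, exp_eq_tsum ℂ, ← Summable.tsum_smul_const]
  · simp only [smul_eq_mul]
  · exact expSeries_summable' (𝕂 := ℂ) c

private lemma real_smul_I (M : E →L[ℂ] E) (u : ℝ) : u • (I • M) = (I * u) • M := by
  rw [← smul_one_smul ℂ u (I • M), smul_smul]
  norm_num [Complex.real_smul, mul_comm]

private lemma duhamel (A B : E →L[ℂ] E) (hA : IsSelfAdjoint A) (hB : IsSelfAdjoint B) (t : ℝ) :
    ‖exp ((I * t) • A) - exp ((I * t) • B)‖ ≤ |t| * ‖A - B‖ := by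
  set BA := I • A with hBA
  set BB := I • B with hBB
  set g : ℝ → E →L[ℂ] E := fun s => exp ((t - s) • BB) * exp (s • BA) with hg
  set g' : ℝ → E →L[ℂ] E :=
    fun s => exp ((t - s) • BB) * ((BA - BB) * exp (s • BA)) with hg'
  have hexp : ∀ u : ℝ, HasDerivAt (fun s : ℝ => exp (s • BB)) (exp (u • BB) * BB) u := by
    intro u
    have := hasDerivAt_exp_smul_const (𝕂 := ℝ) BB u
    simpa using this
  have hderiv : ∀ s : ℝ, HasDerivAt g (g' s) s := by
    intro s
    have h1 : HasDerivAt (fun s : ℝ => exp ((t - s) • BB))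
        ((-1 : ℝ) • (exp ((t - s) • BB) * BB)) s := by
      have hin : HasDerivAt (fun x : ℝ => t - x) (-1) s := (hasDerivAt_id s).const_sub t
      exact HasDerivAt.scomp s (hexp (t - s)) hin
    have h2 : HasDerivAt (fun s : ℝ => exp (s • BA)) (BA * exp (s • BA)) s := by
      have := hasDerivAt_exp_smul_const' (𝕂 := ℝ) BA s
      simpa using this
    have := h1.mul h2
    refine this.congr_deriv ?_
    rw [hg']
    simp only [neg_one_smul, neg_mul]
    noncomm_ring
  have hbound : ∀ s ∈ Set.uIcc (0:ℝ) t, ‖g' s‖ ≤ ‖A - B‖ := by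
    intro s _
    have e1 : ‖exp ((t - s) • BB)‖ ≤ 1 := by
      rw [hBB, real_smul_I]; exact norm_exp_I_smul_le B hB _
    have e2 : ‖exp (s • BA)‖ ≤ 1 := by
      rw [hBA, real_smul_I]; exact norm_exp_I_smul_le A hA _
    have e3 : ‖BA - BB‖ = ‖A - B‖ := by
      rw [hBA, hBB, ← smul_sub, norm_smul, Complex.norm_I, one_mul]
    calc ‖g' s‖ ≤ ‖exp ((t - s) • BB)‖ * (‖BA - BB‖ * ‖exp (s • BA)‖) :=
          norm_mul_le _ _ |>.trans (by gcongr; exact norm_mul_le _ _)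
      _ ≤ 1 * (‖A - B‖ * 1) := by
          rw [e3]
          exact mul_le_mul e1 (mul_le_mul_of_nonneg_left e2 (norm_nonneg _)) (by positivity)
            zero_le_one
      _ = ‖A - B‖ := by ring
  have key := (convex_uIcc (0:ℝ) t).norm_image_sub_le_of_norm_hasDerivWithin_le
    (fun s hs => (hderiv s).hasDerivWithinAt) hbound
    (Set.left_mem_uIcc) (Set.right_mem_uIcc)
  have hg0 : g 0 = exp ((I * t) • B) := by
    simp [hg, hBB, hBA, NormedSpace.exp_zero, real_smul_I]
  have hgt : g t = exp ((I * t) • A) := by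
    simp [hg, hBB, hBA, NormedSpace.exp_zero, real_smul_I]
  calc ‖exp ((I * t) • A) - exp ((I * t) • B)‖ = ‖g t - g 0‖ := by rw [hg0, hgt]
    _ ≤ ‖A - B‖ * ‖t - 0‖ := key
    _ = |t| * ‖A - B‖ := by rw [sub_zero, Real.norm_eq_abs, mul_comm]

private lemma integrable_gauss (A : E →L[ℂ] E) (hA : IsSelfAdjoint A) {α : ℝ} (hα : 0 < α) :
    Integrable fun t : ℝ => Real.exp (-(α * t ^ 2)) • exp ((I * t) • A) := by
  have cont : Continuous fun t : ℝ => Real.exp (-(α * t ^ 2)) • exp ((I * t) • A) := by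
    let +nondep : NormedAlgebra ℚ (E →L[ℂ] E) := .restrictScalars ℚ ℂ _
    exact (Real.continuous_exp.comp (by continuity)).smul
      (exp_continuous.comp ((continuous_const.mul Complex.continuous_ofReal).smul
        continuous_const))
  refine (integrable_exp_neg_mul_sq hα).mono' cont.aestronglyMeasurable ?_
  filter_upwards with t
  have h1 : ‖Real.exp (-(α * t ^ 2)) • exp ((I * t) • A)‖
      = Real.exp (-(α * t ^ 2)) * ‖exp ((I * t) • A)‖ := by
    rw [norm_smul (Real.exp (-(α * t ^ 2))) (exp ((I * t) • A)), Real.norm_eq_abs,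
      _root_.abs_of_nonneg (Real.exp_pos _).le]
  rw [h1, neg_mul]
  have h2 := mul_le_mul_of_nonneg_left (norm_exp_I_smul_le A hA t) (Real.exp_pos (-(α * t ^ 2))).le
  rw [mul_one] at h2
  exact h2

private lemma gauss_apply (A : E →L[ℂ] E) (hA : IsSelfAdjoint A) {α : ℝ} (hα : 0 < α)
    (μ : ℝ) (v : E) (hv : A v = (μ : ℂ) • v) :
    (Real.sqrt (α / Real.pi) • (∫ t : ℝ, Real.exp (-(α * t ^ 2)) • exp ((I * t) • A))) v
      = Real.exp (-(μ ^ 2 / (4 * α))) • v := by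
  have hint : ∀ t : ℝ, (Real.exp (-(α * t ^ 2)) • exp ((I * t) • A)) v
      = (cexp (I * μ * t) * cexp (-(α : ℂ) * t ^ 2)) • v := by
    intro t
    have h1 : ((I * t) • A) v = (I * t * μ) • v := by
      rw [ContinuousLinearMap.smul_apply, hv, smul_smul]
    rw [ContinuousLinearMap.smul_apply, exp_eig _ _ _ h1, ← smul_one_smul ℂ (Real.exp _),
      smul_smul, Complex.real_smul, mul_one, Complex.ofReal_exp]
    rw [← Complex.exp_add, ← Complex.exp_add]
    congr 1
    push_cast
    ring
  rw [ContinuousLinearMap.smul_apply, ContinuousLinearMap.integral_apply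
    (integrable_gauss A hA hα)]
  simp_rw [hint]
  rw [integral_smul_const, fourierIntegral_gaussian (by simpa using hα) (μ : ℂ),
    ← smul_one_smul ℂ (Real.sqrt _), smul_smul, Complex.real_smul, mul_one, ← mul_assoc]
  have hπ := Real.pi_pos
  have key : (Real.sqrt (α / Real.pi) : ℂ) * ((Real.pi : ℂ) / (α : ℂ)) ^ (1 / 2 : ℂ) = 1 := by
    have h2 : ((Real.pi / α : ℝ) : ℂ) ^ (((1/2 : ℝ)) : ℂ) = ((Real.pi / α) ^ (1/2 : ℝ) : ℝ) :=
      (Complex.ofReal_cpow (by positivity) _).symm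
    have h3 : ((1/2 : ℝ) : ℂ) = (1/2 : ℂ) := by norm_num
    rw [← h3]
    push_cast at h2 ⊢
    rw [h2, ← Real.sqrt_eq_rpow, ← Complex.ofReal_mul, ← Real.sqrt_mul (by positivity)]
    rw [div_mul_div_comm, mul_comm, div_self (by positivity), Real.sqrt_one]
    norm_num
  rw [key, one_mul, ← smul_one_smul ℂ (Real.exp (-(μ ^ 2 / (4 * α)))) v,
    Complex.real_smul, mul_one, Complex.ofReal_exp]
  congr 2
  push_cast
  ring

private lemma opNorm_le_of_diag {n : ℕ} (b : OrthonormalBasis (Fin n) ℂ E) (T : E →L[ℂ] E)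
    (C : ℝ) (hC : 0 ≤ C) (c : Fin n → ℂ) (hc : ∀ i, ‖c i‖ ≤ C)
    (hT : ∀ i, T (b i) = c i • b i) : ‖T‖ ≤ C := by
  refine ContinuousLinearMap.opNorm_le_bound _ hC fun x => ?_
  have hTx : T x = ∑ i, (c i * ⟪b i, x⟫_ℂ) • b i := by
    conv_lhs => rw [← b.sum_repr' x]
    rw [map_sum]
    congr 1; ext i
    rw [ContinuousLinearMap.map_smul, hT i, smul_smul, mul_comm]
  have hrepr : ∀ i, b.repr (T x) i = c i * b.repr x i := by
    intro i
    rw [b.repr_apply_apply, b.repr_apply_apply, hTx, b.orthonormal.inner_right_fintype]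
  rw [← b.repr.norm_map (T x), ← b.repr.norm_map x, EuclideanSpace.norm_eq,
    EuclideanSpace.norm_eq]
  have key : ∑ i, ‖b.repr (T x) i‖ ^ 2 ≤ C ^ 2 * ∑ i, ‖b.repr x i‖ ^ 2 := by
    rw [Finset.mul_sum]
    refine Finset.sum_le_sum fun i _ => ?_
    rw [hrepr i, norm_mul, mul_pow]
    exact mul_le_mul_of_nonneg_right (pow_le_pow_left₀ (norm_nonneg _) (hc i) 2) (by positivity)
  calc Real.sqrt (∑ i, ‖b.repr (T x) i‖ ^ 2)
      ≤ Real.sqrt (C ^ 2 * ∑ i, ‖b.repr x i‖ ^ 2) := Real.sqrt_le_sqrt key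
    _ = C * Real.sqrt (∑ i, ‖b.repr x i‖ ^ 2) := by
        rw [Real.sqrt_mul (by positivity), Real.sqrt_sq hC]

private lemma integral_abs_mul_gauss {α : ℝ} (hα : 0 < α) :
    ∫ t : ℝ, |t| * Real.exp (-(α * t ^ 2)) = 1 / α := by
  have h0 : (fun t : ℝ => |t| * Real.exp (-(α * t ^ 2)))
      = fun t : ℝ => |t| * Real.exp (-(α * |t| ^ 2)) := by
    funext t; rw [_root_.sq_abs]
  rw [h0, integral_comp_abs (f := fun t : ℝ => t * Real.exp (-(α * t ^ 2)))]
  have hderiv : ∀ x ∈ Set.Ici (0:ℝ),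
      HasDerivAt (fun x : ℝ => -(1 / (2 * α)) * Real.exp (-(α * x ^ 2)))
        (x * Real.exp (-(α * x ^ 2))) x := by
    intro x _
    have h1 : HasDerivAt (fun x : ℝ => -(α * x ^ 2)) (-(α * (2 * x))) x := by
      have := ((hasDerivAt_pow 2 x).const_mul α).neg
      exact this.congr_deriv (by ring)
    have h2 := (h1.exp).const_mul (-(1 / (2 * α)))
    refine h2.congr_deriv ?_
    field_simp
  have hint : IntegrableOn (fun x : ℝ => x * Real.exp (-(α * x ^ 2))) (Set.Ioi 0) := by
    have := integrable_mul_exp_neg_mul_sq hα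
    simpa [neg_mul] using this.integrableOn
  have htend : Filter.Tendsto (fun x : ℝ => -(1 / (2 * α)) * Real.exp (-(α * x ^ 2)))
      Filter.atTop (nhds 0) := by
    rw [show (0:ℝ) = -(1 / (2 * α)) * 0 by ring]
    refine Filter.Tendsto.const_mul _ (Real.tendsto_exp_atBot.comp ?_)
    refine Filter.tendsto_neg_atBot_iff.mpr ?_
    exact (Filter.tendsto_pow_atTop two_ne_zero).const_mul_atTop hα
  rw [integral_Ioi_of_hasDerivAt_of_tendsto' hderiv hint htend]
  norm_num
  ring

private lemma integrable_abs_gauss {α : ℝ} (hα : 0 < α) :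
    Integrable fun t : ℝ => |t| * Real.exp (-(α * t ^ 2)) := by
  have := (integrable_mul_exp_neg_mul_sq hα).abs
  refine this.congr ?_
  filter_upwards with t
  rw [abs_mul, _root_.abs_of_nonneg (Real.exp_pos _).le, neg_mul]

end Aux

set_option maxHeartbeats 1000000 in
set_option synthInstance.maxHeartbeats 1000000 in
open Complex NormedSpace in
theorem stmt_18 {E : Type*} [NormedAddCommGroup E] [InnerProductSpace ℂ E]
    [FiniteDimensional ℂ E] (H M P₀ : E →L[ℂ] E)
    (hH : IsSelfAdjoint H) (hM : IsSelfAdjoint M)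
    (hpos : ∀ v : E, 0 ≤ (⟪v, H v⟫_ℂ).re)
    (ψ₀ : E) (hψ : ‖ψ₀‖ = 1) (hgs : H ψ₀ = 0)
    (hker : ∀ v : E, H v = 0 → ∃ c : ℂ, v = c • ψ₀)
    (γ : ℝ) (hγ : 0 < γ)
    (hgap : ∀ μ : ℝ, Module.End.HasEigenvalue (H : E →ₗ[ℂ] E) (μ : ℂ) → μ = 0 ∨ γ ≤ μ)
    (hP₀ : ∀ x : E, P₀ x = ⟪ψ₀, x⟫_ℂ • ψ₀)
    (η : ℝ) (hη : ‖H - M‖ ≤ η)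
    (α : ℝ) (hα : 0 < α) :
    ‖Real.sqrt (α / Real.pi) •
        (∫ t : ℝ, Real.exp (-(α * t ^ 2)) • NormedSpace.exp ((Complex.I * t) • M))
      - P₀‖ ≤ η / Real.sqrt (α * Real.pi) + Real.exp (-(γ ^ 2 / (4 * α))) := by
  have hπ := Real.pi_pos
  have hη0 : 0 ≤ η := (norm_nonneg _).trans hη
  set PM : E →L[ℂ] E := Real.sqrt (α / Real.pi) •
    (∫ t : ℝ, Real.exp (-(α * t ^ 2)) • exp ((I * t) • M)) with hPM
  set PH : E →L[ℂ] E := Real.sqrt (α / Real.pi) •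
    (∫ t : ℝ, Real.exp (-(α * t ^ 2)) • exp ((I * t) • H)) with hPHdef
  -- Step A
  have stepA : ‖PM - PH‖ ≤ η / Real.sqrt (α * Real.pi) := by
    have hsub : PM - PH = Real.sqrt (α / Real.pi) •
        ∫ t : ℝ, (Real.exp (-(α * t ^ 2)) • exp ((I * t) • M)
          - Real.exp (-(α * t ^ 2)) • exp ((I * t) • H)) := by
      rw [hPM, hPHdef, ← smul_sub, integral_sub (integrable_gauss M hM hα)
        (integrable_gauss H hH hα)]
    have hnorm : ‖∫ t : ℝ, (Real.exp (-(α * t ^ 2)) • exp ((I * t) • M)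
        - Real.exp (-(α * t ^ 2)) • exp ((I * t) • H))‖
        ≤ ∫ t : ℝ, η * (|t| * Real.exp (-(α * t ^ 2))) := by
      refine norm_integral_le_of_norm_le ((integrable_abs_gauss hα).const_mul η) ?_
      filter_upwards with t
      rw [← smul_sub]
      have h1 : ‖Real.exp (-(α * t ^ 2)) • (exp ((I * t) • M) - exp ((I * t) • H))‖
          = Real.exp (-(α * t ^ 2)) * ‖exp ((I * t) • M) - exp ((I * t) • H)‖ :=
        (norm_smul (Real.exp (-(α * t ^ 2))) (exp ((I * t) • M) - exp ((I * t) • H))).trans (by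
          rw [Real.norm_eq_abs, _root_.abs_of_nonneg (Real.exp_pos _).le])
      rw [h1]
      have h2 := duhamel M H hM hH t
      have h3 : ‖M - H‖ ≤ η := by rwa [norm_sub_rev]
      calc Real.exp (-(α * t ^ 2)) * ‖exp ((I * t) • M) - exp ((I * t) • H)‖
          ≤ Real.exp (-(α * t ^ 2)) * (|t| * η) := by
            refine mul_le_mul_of_nonneg_left (h2.trans ?_) (Real.exp_pos _).le
            exact mul_le_mul_of_nonneg_left h3 (abs_nonneg _)
        _ = η * (|t| * Real.exp (-(α * t ^ 2))) := by ring
    have hval : ∫ t : ℝ, η * (|t| * Real.exp (-(α * t ^ 2))) = η * (1 / α) := by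
      rw [MeasureTheory.integral_const_mul, integral_abs_mul_gauss hα]
    have hscal : Real.sqrt (α / Real.pi) * (η * (1 / α)) = η / Real.sqrt (α * Real.pi) := by
      have h1 : Real.sqrt (α / Real.pi) * Real.sqrt (α * Real.pi) = α := by
        rw [← Real.sqrt_mul (by positivity), show α / Real.pi * (α * Real.pi) = α ^ 2 by
          field_simp]
        exact Real.sqrt_sq hα.le
      have h2 : 0 < Real.sqrt (α * Real.pi) := Real.sqrt_pos.mpr (by positivity)
      have h3 : Real.sqrt (α / Real.pi) = α / Real.sqrt (α * Real.pi) := by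
        rw [eq_div_iff h2.ne']; exact h1
      rw [h3]
      field_simp
    calc ‖PM - PH‖ = Real.sqrt (α / Real.pi) * ‖∫ t : ℝ,
          (Real.exp (-(α * t ^ 2)) • exp ((I * t) • M)
            - Real.exp (-(α * t ^ 2)) • exp ((I * t) • H))‖ := by
          rw [hsub]
          exact (norm_smul (Real.sqrt (α / Real.pi))
              (∫ t : ℝ, (Real.exp (-(α * t ^ 2)) • exp ((I * t) • M)
                - Real.exp (-(α * t ^ 2)) • exp ((I * t) • H)))).trans (by
            rw [Real.norm_eq_abs, _root_.abs_of_nonneg (Real.sqrt_nonneg _)])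
      _ ≤ Real.sqrt (α / Real.pi) * (η * (1 / α)) := by
          rw [← hval]
          exact mul_le_mul_of_nonneg_left hnorm (Real.sqrt_nonneg _)
      _ = η / Real.sqrt (α * Real.pi) := hscal
  -- Step B
  have stepB : ‖PH - P₀‖ ≤ Real.exp (-(γ ^ 2 / (4 * α))) := by
    have hsym := ContinuousLinearMap.isSelfAdjoint_iff_isSymmetric.mp hH
    set b := hsym.eigenvectorBasis rfl with hb
    set μ := hsym.eigenvalues rfl with hμ
    have heig : ∀ i, H (b i) = (μ i : ℂ) • b i := fun i =>
      hsym.apply_eigenvectorBasis rfl i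
    set c : Fin (Module.finrank ℂ E) → ℂ :=
      fun i => if μ i = 0 then 0 else (Real.exp (-(μ i ^ 2 / (4 * α))) : ℂ) with hc
    refine opNorm_le_of_diag b (PH - P₀) _ (Real.exp_pos _).le c ?_ ?_
    · intro i
      by_cases h : μ i = 0
      · have hci : c i = 0 := by simp [hc, h]
        rw [hci, norm_zero]
        positivity
      · have hci : c i = (Real.exp (-(μ i ^ 2 / (4 * α))) : ℂ) := by simp [hc, h]
        rw [hci, Complex.norm_real, Real.norm_eq_abs,
          _root_.abs_of_nonneg (Real.exp_pos _).le]
        rcases hgap (μ i) (hsym.hasEigenvalue_eigenvalues rfl i) with h0 | hge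
        · exact absurd h0 h
        · refine Real.exp_le_exp.mpr ?_
          have hsq : γ ^ 2 ≤ μ i ^ 2 := pow_le_pow_left₀ hγ.le hge 2
          have h5 : γ ^ 2 / (4 * α) ≤ μ i ^ 2 / (4 * α) := by gcongr
          linarith
    · intro i
      have hPHb : PH (b i) = Real.exp (-(μ i ^ 2 / (4 * α))) • b i :=
        gauss_apply H hH hα (μ i) (b i) (heig i)
      rw [ContinuousLinearMap.sub_apply, hPHb, hP₀]
      by_cases h : μ i = 0
      · have hci : c i = 0 := by simp [hc, h]
        have hz : H (b i) = 0 := by rw [heig i, h]; simp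
        obtain ⟨k, hk⟩ := hker (b i) hz
        have hinner : ⟪ψ₀, b i⟫_ℂ • ψ₀ = b i := by
          rw [hk, inner_smul_right, inner_self_eq_norm_sq_to_K, hψ]
          norm_num
        have hexp1 : Real.exp (-(μ i ^ 2 / (4 * α))) = 1 := by rw [h]; norm_num
        rw [hci, hinner, hexp1, one_smul, sub_self, zero_smul]
      · have hci : c i = (Real.exp (-(μ i ^ 2 / (4 * α))) : ℂ) := by simp [hc, h]
        have hinner : ⟪ψ₀, b i⟫_ℂ = 0 := by
          have e1 : ⟪ψ₀, H (b i)⟫_ℂ = (μ i : ℂ) * ⟪ψ₀, b i⟫_ℂ := by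
            rw [heig i, inner_smul_right]
          have e2 : ⟪ψ₀, H (b i)⟫_ℂ = 0 := by
            have h6 := hsym ψ₀ (b i)
            simp only [ContinuousLinearMap.coe_coe] at h6
            rw [← h6, hgs, inner_zero_left]
          rw [e2] at e1
          have h7 : (μ i : ℂ) ≠ 0 := by exact_mod_cast h
          field_simp at e1
          exact (mul_eq_zero.mp e1.symm).resolve_left h7
        rw [hci, hinner, zero_smul, sub_zero, ← smul_one_smul ℂ (Real.exp _) (b i),
          Complex.real_smul, mul_one]
  calc ‖PM - P₀‖ ≤ ‖PM - PH‖ + ‖PH - P₀‖ := norm_sub_le_norm_sub_add_norm_sub _ _ _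
    _ ≤ η / Real.sqrt (α * Real.pi) + Real.exp (-(γ ^ 2 / (4 * α))) := add_le_add stepA stepB
end
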